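/- Let f : [0,∞) → [0,∞) be nonincreasing and integrable, let p(θ) = 1 - e^{-θ}, and let c(z) = (1/2)e^{-z}. If a nonnegative number P satisfies P ≤ ∫_0^θ f(z) dz + f(θ) for all θ > 0, then (1/2)·P ≤ ∫_0^∞ p'(z) f(z) dz. -/

import Mathlib

open MeasureTheory

set_option maxHeartbeats 1000000 in
theorem stmt_18 (f : ℝ → ℝ)
    (hf_nonneg : ∀ x, 0 ≤ x → 0 ≤ f x)
    (hf_anti : AntitoneOn f (Set.Ici 0))
    (hf_int : IntegrableOn f (Set.Ioi 0))
    (P : ℝ) (hP : 0 ≤ P)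
    (hbound : ∀ θ > (0:ℝ), P ≤ (∫ z in (0:ℝ)..θ, f z) + f θ) :
    (1/2) * P ≤ ∫ z in Set.Ioi (0:ℝ), deriv (fun t => 1 - Real.exp (-t)) z * f z := by
  -- Step 0: compute the derivative
  have hderiv : ∀ z : ℝ, deriv (fun t => 1 - Real.exp (-t)) z = Real.exp (-z) := by
    intro z
    have h1 : HasDerivAt (fun t : ℝ => Real.exp (-t)) (-Real.exp (-z)) z := by
      exact ((Real.hasDerivAt_exp (-z)).comp z (hasDerivAt_neg z)).congr_deriv (by ring)
    have h : HasDerivAt (fun t : ℝ => 1 - Real.exp (-t)) (Real.exp (-z)) z := by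
      simpa using h1.const_sub 1
    exact h.deriv
  simp only [hderiv]
  -- notation
  set ν := volume.restrict (Set.Ioi (0:ℝ)) with hν
  -- a measurable version of f
  obtain ⟨f', hf'm, hff'⟩ :
      ∃ f' : ℝ → ℝ, StronglyMeasurable f' ∧ f =ᵐ[ν] f' :=
    ⟨hf_int.1.mk f, hf_int.1.stronglyMeasurable_mk, hf_int.1.ae_eq_mk⟩
  have hf'int : Integrable f' ν := hf_int.congr hff'
  -- basic integrability facts
  have hint_exp : IntegrableOn (fun θ : ℝ => Real.exp (-θ)) (Set.Ioi 0) := by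
    simpa [neg_mul, one_mul] using exp_neg_integrableOn_Ioi (0:ℝ) one_pos
  have hexp_le_one : ∀ θ : ℝ, 0 < θ → Real.exp (-θ) ≤ 1 := by
    intro θ hθ
    exact Real.exp_le_one_iff.mpr (by linarith)
  -- integrability of z ↦ exp(-z) * f z on (0, ∞)
  have hI : IntegrableOn (fun z : ℝ => Real.exp (-z) * f z) (Set.Ioi 0) := by
    refine Integrable.mono hf_int
      ((Real.continuous_exp.comp continuous_neg).aestronglyMeasurable.mul hf_int.1) ?_
    filter_upwards [ae_restrict_mem measurableSet_Ioi] with z hz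
    have h0 : 0 ≤ f z := hf_nonneg z (le_of_lt hz)
    have h1 : Real.exp (-z) ≤ 1 := hexp_le_one z hz
    rw [Real.norm_eq_abs, Real.norm_eq_abs, abs_mul,
      abs_of_nonneg (Real.exp_pos _).le]
    nlinarith [abs_nonneg (f z), le_abs_self (f z)]
  -- the primitive of (the measurable version of) f, extended by 0 outside (0, ∞)
  set g0 : ℝ → ℝ := fun z => (Set.Ioi (0:ℝ)).indicator f' z with hg0
  have hg0int : Integrable g0 volume :=
    (integrable_indicator_iff measurableSet_Ioi).2 hf'int
  have hF0cont : Continuous fun θ : ℝ => ∫ z in (0:ℝ)..θ, g0 z :=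
    hg0int.continuous_primitive 0
  -- F agrees with the primitive of g0 on (0, ∞)
  have hF0F : ∀ θ : ℝ, 0 < θ → (∫ z in (0:ℝ)..θ, g0 z) = ∫ z in (0:ℝ)..θ, f z := by
    intro θ hθ
    rw [intervalIntegral.integral_of_le hθ.le, intervalIntegral.integral_of_le hθ.le]
    have h1 : ∫ z in Set.Ioc 0 θ, g0 z = ∫ z in Set.Ioc 0 θ ∩ Set.Ioi 0, f' z :=
      setIntegral_indicator measurableSet_Ioi
    rw [h1, Set.inter_eq_left.mpr Set.Ioc_subset_Ioi_self]
    exact (integral_congr_ae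
      (ae_restrict_of_ae_restrict_of_subset Set.Ioc_subset_Ioi_self hff')).symm
  -- bound for the primitive
  set C' : ℝ := ∫ z, ‖f' z‖ ∂ν with hC'
  have hC'nonneg : 0 ≤ C' := integral_nonneg fun z => norm_nonneg _
  have hnormg0 : (∫ z, ‖g0 z‖ ∂volume) = C' := by
    have : (fun z => ‖g0 z‖) = fun z => (Set.Ioi (0:ℝ)).indicator (fun z => ‖f' z‖) z := by
      funext z
      simp [hg0, norm_indicator_eq_indicator_norm]
    rw [this, integral_indicator measurableSet_Ioi]
  have hF0_bound : ∀ θ : ℝ, 0 < θ → |∫ z in (0:ℝ)..θ, g0 z| ≤ C' := by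
    intro θ hθ
    have h1 : |∫ z in (0:ℝ)..θ, g0 z| ≤ ∫ z in Set.Ioc 0 θ, ‖g0 z‖ := by
      rw [intervalIntegral.integral_of_le hθ.le]
      simpa [Real.norm_eq_abs] using
        norm_integral_le_integral_norm (f := g0) (μ := volume.restrict (Set.Ioc 0 θ))
    refine h1.trans ?_
    rw [← hnormg0]
    exact setIntegral_le_integral hg0int.norm
      (Filter.Eventually.of_forall fun z => norm_nonneg _)
  -- integrability of θ ↦ exp(-θ) * F θ on (0, ∞)
  have hA : IntegrableOn (fun θ : ℝ => Real.exp (-θ) * ∫ z in (0:ℝ)..θ, f z)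
      (Set.Ioi 0) := by
    have hA0 : IntegrableOn (fun θ : ℝ => Real.exp (-θ) * ∫ z in (0:ℝ)..θ, g0 z)
        (Set.Ioi 0) := by
      refine Integrable.mono (hint_exp.mul_const C')
        ((Real.continuous_exp.comp continuous_neg).mul hF0cont).aestronglyMeasurable ?_
      filter_upwards [ae_restrict_mem measurableSet_Ioi] with θ hθ
      rw [Real.norm_eq_abs, Real.norm_eq_abs, abs_mul, abs_of_nonneg (Real.exp_pos _).le]
      have h2 := hF0_bound θ hθ
      have h3 : (0:ℝ) < Real.exp (-θ) := Real.exp_pos _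
      calc Real.exp (-θ) * |∫ z in (0:ℝ)..θ, g0 z| ≤ Real.exp (-θ) * C' := by
            exact mul_le_mul_of_nonneg_left h2 h3.le
        _ ≤ |Real.exp (-θ) * C'| := le_abs_self _
    refine hA0.congr_fun ?_ measurableSet_Ioi
    intro θ hθ
    show Real.exp (-θ) * (∫ z in (0:ℝ)..θ, g0 z) = Real.exp (-θ) * ∫ z in (0:ℝ)..θ, f z
    rw [hF0F θ hθ]
  -- The Fubini step:
  -- ∫_{θ>0} e^{-θ} (∫_0^θ f) dθ = ∫_{z>0} e^{-z} f z dz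
  have hswap : (∫ θ in Set.Ioi (0:ℝ), Real.exp (-θ) * ∫ z in (0:ℝ)..θ, f z)
      = ∫ z in Set.Ioi (0:ℝ), Real.exp (-z) * f z := by
    set g : ℝ → ℝ → ℝ := fun θ z => Real.exp (-θ) * (Set.Ioo (0:ℝ) θ).indicator f' z
      with hg
    -- measurability of the uncurried function
    have hSmeas : MeasurableSet {q : ℝ × ℝ | 0 < q.2 ∧ q.2 < q.1} :=
      (measurableSet_lt measurable_const measurable_snd).inter
        (measurableSet_lt measurable_snd measurable_fst)
    have hunc : Function.uncurry g = fun p : ℝ × ℝ =>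
        Real.exp (-p.1) * {q : ℝ × ℝ | 0 < q.2 ∧ q.2 < q.1}.indicator
          (fun q => f' q.2) p := by
      funext p
      simp only [hg, Function.uncurry, Set.indicator_apply, Set.mem_Ioo,
        Set.mem_setOf_eq]
    have hgm : AEStronglyMeasurable (Function.uncurry g) (ν.prod ν) := by
      rw [hunc]
      exact ((Real.measurable_exp.comp measurable_fst.neg).mul
        (((hf'm.measurable.comp measurable_snd)).indicator hSmeas)).aestronglyMeasurable
    -- integrability of the uncurried function
    have hgint : Integrable (Function.uncurry g) (ν.prod ν) := by
      rw [integrable_prod_iff hgm]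
      constructor
      · refine Filter.Eventually.of_forall fun θ => ?_
        simp only [Function.uncurry_apply_pair, hg]
        exact (hf'int.indicator measurableSet_Ioo).const_mul _
      · -- the function θ ↦ ∫ ‖g θ z‖ dz is dominated by e^{-θ} C'
        refine Integrable.mono (hint_exp.mul_const C')
          hgm.norm.integral_prod_right' ?_
        filter_upwards [ae_restrict_mem measurableSet_Ioi] with θ hθ
        simp only [Function.uncurry_apply_pair, hg]
        have hval : (∫ z, ‖Real.exp (-θ) * (Set.Ioo (0:ℝ) θ).indicator f' z‖ ∂ν)
            = Real.exp (-θ) * ∫ z, ‖(Set.Ioo (0:ℝ) θ).indicator f' z‖ ∂ν := by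
          rw [← integral_const_mul]
          congr 1
          funext z
          simp [norm_mul, abs_of_nonneg (Real.exp_pos (-θ)).le, Real.norm_eq_abs]
        rw [Real.norm_eq_abs, hval]
        have hb : (∫ z, ‖(Set.Ioo (0:ℝ) θ).indicator f' z‖ ∂ν) ≤ C' := by
          rw [hC']
          refine integral_mono (hf'int.indicator measurableSet_Ioo).norm hf'int.norm
            fun z => ?_
          rw [norm_indicator_eq_indicator_norm]
          exact Set.indicator_le_self' (fun x _ => norm_nonneg _) z
        have h1 : |Real.exp (-θ) * (∫ z, ‖(Set.Ioo (0:ℝ) θ).indicator f' z‖ ∂ν)|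
            = Real.exp (-θ) * ∫ z, ‖(Set.Ioo (0:ℝ) θ).indicator f' z‖ ∂ν := by
          rw [abs_of_nonneg]
          exact mul_nonneg (Real.exp_pos _).le (integral_nonneg fun z => norm_nonneg _)
        rw [h1]
        calc Real.exp (-θ) * ∫ z, ‖(Set.Ioo (0:ℝ) θ).indicator f' z‖ ∂ν
            ≤ Real.exp (-θ) * C' := mul_le_mul_of_nonneg_left hb (Real.exp_pos _).le
          _ ≤ ‖Real.exp (-θ) * C'‖ := le_abs_self _
    have hkey := integral_integral_swap hgint
    -- identify the left-hand side
    have hL : (∫ θ, ∫ z, g θ z ∂ν ∂ν)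
        = ∫ θ in Set.Ioi (0:ℝ), Real.exp (-θ) * ∫ z in (0:ℝ)..θ, f z := by
      refine setIntegral_congr_fun measurableSet_Ioi fun θ hθ => ?_
      have hθ' : (0:ℝ) < θ := hθ
      rw [hg]
      simp only
      rw [integral_const_mul]
      congr 1
      rw [setIntegral_indicator measurableSet_Ioo,
        Set.inter_eq_right.mpr Set.Ioo_subset_Ioi_self,
        intervalIntegral.integral_of_le hθ'.le, integral_Ioc_eq_integral_Ioo]
      exact (integral_congr_ae
        (ae_restrict_of_ae_restrict_of_subset Set.Ioo_subset_Ioi_self hff')).symm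
    -- identify the right-hand side
    have hR : (∫ z, ∫ θ, g θ z ∂ν ∂ν)
        = ∫ z in Set.Ioi (0:ℝ), Real.exp (-z) * f z := by
      have hR1 : (∫ z, ∫ θ, g θ z ∂ν ∂ν)
          = ∫ z in Set.Ioi (0:ℝ), Real.exp (-z) * f' z := by
        refine setIntegral_congr_fun measurableSet_Ioi fun z hz => ?_
        have hz' : (0:ℝ) < z := hz
        have heq : (fun θ => g θ z)
            = fun θ => (Set.Ioi z).indicator (fun θ => Real.exp (-θ) * f' z) θ := by
          funext θ
          show Real.exp (-θ) * (Set.Ioo (0:ℝ) θ).indicator f' z = _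
          by_cases h : z < θ
          · have hmem : z ∈ Set.Ioo (0:ℝ) θ := ⟨hz', h⟩
            rw [Set.indicator_of_mem hmem, Set.indicator_of_mem (Set.mem_Ioi.mpr h)]
          · have hmem : z ∉ Set.Ioo (0:ℝ) θ := fun hc => h hc.2
            rw [Set.indicator_of_notMem hmem, Set.indicator_of_notMem
              (by simpa using h), mul_zero]
        rw [heq, setIntegral_indicator measurableSet_Ioi,
          Set.inter_eq_right.mpr (Set.Ioi_subset_Ioi hz'.le),
          integral_mul_const, integral_exp_neg_Ioi]
      rw [hR1]
      refine integral_congr_ae ?_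
      filter_upwards [hff'] with z hz
      rw [hz]
    rw [← hL, hkey, hR]
  -- Main chain of inequalities
  have hone : (∫ θ in Set.Ioi (0:ℝ), Real.exp (-θ)) = 1 := by
    simpa using integral_exp_neg_Ioi 0
  set I : ℝ := ∫ z in Set.Ioi (0:ℝ), Real.exp (-z) * f z with hIdef
  have hstep1 : (1/2) * P = ∫ θ in Set.Ioi (0:ℝ), (1/2) * (Real.exp (-θ) * P) := by
    rw [integral_const_mul, integral_mul_const, hone, one_mul]
  have hstep2 : (∫ θ in Set.Ioi (0:ℝ), (1/2) * (Real.exp (-θ) * P))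
      ≤ ∫ θ in Set.Ioi (0:ℝ),
          (1/2) * (Real.exp (-θ) * ((∫ z in (0:ℝ)..θ, f z) + f θ)) := by
    refine setIntegral_mono_on ((hint_exp.mul_const P).const_mul _) ?_
      measurableSet_Ioi ?_
    · have : (fun θ : ℝ => (1/2) * (Real.exp (-θ) * ((∫ z in (0:ℝ)..θ, f z) + f θ)))
          = fun θ : ℝ => (1/2) * (Real.exp (-θ) * (∫ z in (0:ℝ)..θ, f z))
              + (1/2) * (Real.exp (-θ) * f θ) := by
        funext θ; ring
      rw [this]
      exact (hA.const_mul _).add (hI.const_mul _)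
    · intro θ hθ
      have := hbound θ hθ
      have h1 : (0:ℝ) < Real.exp (-θ) := Real.exp_pos _
      nlinarith
  have hstep3 : (∫ θ in Set.Ioi (0:ℝ),
        (1/2) * (Real.exp (-θ) * ((∫ z in (0:ℝ)..θ, f z) + f θ))) = I := by
    have hsplit : (fun θ : ℝ =>
        (1/2) * (Real.exp (-θ) * ((∫ z in (0:ℝ)..θ, f z) + f θ)))
        = fun θ : ℝ => (1/2) * (Real.exp (-θ) * (∫ z in (0:ℝ)..θ, f z))
            + (1/2) * (Real.exp (-θ) * f θ) := by
      funext θ; ring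
    rw [hsplit, integral_add ((hA.const_mul _)) ((hI.const_mul _)),
      integral_const_mul, integral_const_mul, hswap]
    ring
  calc (1/2) * P = ∫ θ in Set.Ioi (0:ℝ), (1/2) * (Real.exp (-θ) * P) := hstep1
    _ ≤ ∫ θ in Set.Ioi (0:ℝ),
          (1/2) * (Real.exp (-θ) * ((∫ z in (0:ℝ)..θ, f z) + f θ)) := hstep2
    _ = I := hstep3
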